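/- Suppose m > 2. There exists a constant C > 0, independent of h, τ₀ and r, such that for all sufficiently small h > 0 and all 0 < r < a, one has A(r) ≥ 2τ(r+1)^{−2} φ'(r) − C h μ'(r). (More precisely, for 0 < r < a one has A(r) ≥ 2τ(r+1)^{−2}φ'(r) − τ² a^{−1} μ'(r), and τ² a^{−1} = τ₀² h^{m − 2/3} ≤ C h when m > 2 and h is small.) -/

import Mathlib

open Real

/-- The weight function `μ` of Section 2 (with parameters `s` and `a = h^{-m}`). -/
noncomputable def muF (s a r : ℝ) : ℝ :=
  if r ≤ a then (r + 1) ^ 2 - 1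
  else (a + 1) ^ 2 - 1 + (a + 1) ^ (-(2 * s) + 1) - (r + 1) ^ (-(2 * s) + 1)

/-- The derivative `μ'` of the weight function (away from `r = a`). -/
noncomputable def muD (s a r : ℝ) : ℝ :=
  if r < a then 2 * (r + 1) else (2 * s - 1) * (r + 1) ^ (-(2 * s))

/-- The derivative `φ'` of the phase function (with parameters `τ` and `a`). -/
noncomputable def phiD (τ a r : ℝ) : ℝ :=
  if r ≤ a then τ * ((r + 1)⁻¹ - (a + 1)⁻¹) else 0

/-- The second derivative `φ''` of the phase function (away from `r = a`). -/
noncomputable def phiDD (τ a r : ℝ) : ℝ :=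
  if r < a then -τ * (r + 1) ^ (-(2 : ℝ)) else 0

/-- The phase function `φ(r) = ∫₀^r φ'(t) dt`. -/
noncomputable def phiF (τ a r : ℝ) : ℝ := ∫ t in (0 : ℝ)..r, phiD τ a t

/-- `A(r) = (μ φ'²)'(r)`. -/
noncomputable def AF (s τ a r : ℝ) : ℝ :=
  deriv (fun t => muF s a t * (phiD τ a t) ^ 2) r

/-- `B(r) = (μ(r)(h^{-1}(r+1)^{-δ} + |φ''(r)|))² / (h^{-1} φ'(r) μ(r) + μ'(r))`. -/
noncomputable def BF (δ s h τ a r : ℝ) : ℝ :=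
  (muF s a r * (h⁻¹ * (r + 1) ^ (-δ) + |phiDD τ a r|)) ^ 2 /
    (h⁻¹ * phiD τ a r * muF s a r + muD s a r)


lemma key_statement7 (s τ a : ℝ) (ha : 0 < a) (r : ℝ) (hr0 : 0 < r) (hra : r < a) :
    AF s τ a r ≥ 2 * τ * (r + 1) ^ (-(2 : ℝ)) * phiD τ a r - τ ^ 2 * a⁻¹ * muD s a r := by
  have hu : (0:ℝ) < r + 1 := by linarith
  have hb : (0:ℝ) < a + 1 := by linarith
  set c : ℝ := (r + 1)⁻¹ - (a + 1)⁻¹ with hc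
  have hid : HasDerivAt (fun t : ℝ => t + 1) 1 r := (hasDerivAt_id r).add_const 1
  have hinv : HasDerivAt (fun t : ℝ => (t + 1)⁻¹) (-1 / (r + 1) ^ 2) r :=
    hid.inv (ne_of_gt hu)
  have h2 : HasDerivAt (fun t : ℝ => (τ * ((t + 1)⁻¹ - (a + 1)⁻¹)) ^ 2)
      ((2 : ℕ) * (τ * c) ^ 1 * (τ * (-1 / (r + 1) ^ 2))) r :=
    (((hinv.sub_const _).const_mul τ)).pow 2
  have h1 : HasDerivAt (fun t : ℝ => (t + 1) ^ 2 - 1)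
      (((2:ℕ) * (r + 1) ^ 1 * 1)) r := ((hid.pow 2)).sub_const 1
  have hmul := h1.mul h2
  have hev : (fun t => muF s a t * (phiD τ a t) ^ 2) =ᶠ[nhds r]
      (fun t : ℝ => ((t + 1) ^ 2 - 1) * (τ * ((t + 1)⁻¹ - (a + 1)⁻¹)) ^ 2) := by
    filter_upwards [Iio_mem_nhds hra] with t ht
    simp [muF, phiD, (Set.mem_Iio.mp ht).le]
  have hAF : AF s τ a r = ((2:ℕ) * (r + 1) ^ 1 * 1) * (τ * c) ^ 2 +
      ((r + 1) ^ 2 - 1) * ((2 : ℕ) * (τ * c) ^ 1 * (τ * (-1 / (r + 1) ^ 2))) := by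
    rw [AF, hev.deriv_eq]; exact hmul.deriv
  have hr2 : (r + 1) ^ (-(2 : ℝ)) = ((r + 1) ^ (2:ℕ))⁻¹ := by
    rw [← Real.rpow_natCast (r + 1) 2, ← Real.rpow_neg hu.le]; norm_num
  rw [hAF, phiD, if_pos hra.le, muD, if_pos hra, hr2]
  rw [ge_iff_le, ← sub_nonneg]
  have hkey : ((2:ℕ) * (r + 1) ^ 1 * 1) * (τ * c) ^ 2 +
      ((r + 1) ^ 2 - 1) * ((2 : ℕ) * (τ * c) ^ 1 * (τ * (-1 / (r + 1) ^ 2))) -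
      (2 * τ * ((r + 1) ^ (2:ℕ))⁻¹ * (τ * c) - τ ^ 2 * a⁻¹ * (2 * (r + 1))) =
      2 * τ ^ 2 * (((r + 1) * (a + 1) ^ 2 - a * (a - r)) / (a * (a + 1) ^ 2)) := by
    rw [hc]
    field_simp
    ring
  rw [hkey]
  have hnum : (0:ℝ) ≤ (r + 1) * (a + 1) ^ 2 - a * (a - r) := by nlinarith
  positivity

/-- For `m > 2`, on `0 < r < a` (with `a = h^{-m}`, `τ = τ₀ h^{-1/3}`):
(i) the precise bound `A(r) ≥ 2τ(r+1)^{-2} φ'(r) - τ² a⁻¹ μ'(r)`;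
(ii) there is `C > 0` (independent of `h`, `τ₀`, `r`) such that for every `τ₀ ≥ 1` and all
sufficiently small `h`, `A(r) ≥ 2τ(r+1)^{-2} φ'(r) - C h μ'(r)`. -/
theorem statement7 (m s : ℝ) (hm : 2 < m) :
    (∀ h τ₀ : ℝ, 0 < h → h < 1 → 1 ≤ τ₀ → ∀ r : ℝ, 0 < r → r < h ^ (-m) →
      AF s (τ₀ * h ^ (-(1 : ℝ) / 3)) (h ^ (-m)) r ≥
        2 * (τ₀ * h ^ (-(1 : ℝ) / 3)) * (r + 1) ^ (-(2 : ℝ)) *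
            phiD (τ₀ * h ^ (-(1 : ℝ) / 3)) (h ^ (-m)) r -
          (τ₀ * h ^ (-(1 : ℝ) / 3)) ^ 2 * (h ^ (-m))⁻¹ * muD s (h ^ (-m)) r) ∧
    (∃ C > (0 : ℝ), ∀ τ₀ : ℝ, 1 ≤ τ₀ → ∃ h₀ > (0 : ℝ), ∀ h : ℝ, 0 < h → h ≤ h₀ →
      ∀ r : ℝ, 0 < r → r < h ^ (-m) →
        AF s (τ₀ * h ^ (-(1 : ℝ) / 3)) (h ^ (-m)) r ≥
          2 * (τ₀ * h ^ (-(1 : ℝ) / 3)) * (r + 1) ^ (-(2 : ℝ)) *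
              phiD (τ₀ * h ^ (-(1 : ℝ) / 3)) (h ^ (-m)) r -
            C * h * muD s (h ^ (-m)) r) := by
  constructor
  · intro h τ₀ hh _ _ r hr0 hra
    exact key_statement7 s _ _ (Real.rpow_pos_of_pos hh _) r hr0 hra
  · refine ⟨1, one_pos, fun τ₀ hτ₀ => ?_⟩
    have hτ0 : (0:ℝ) < τ₀ := lt_of_lt_of_le one_pos hτ₀
    refine ⟨min 1 (τ₀⁻¹ ^ 6), by positivity, fun h hh hh0 r hr0 hra => ?_⟩
    have h1 : h ≤ 1 := le_trans hh0 (min_le_left _ _)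
    have h6 : h ≤ τ₀⁻¹ ^ 6 := le_trans hh0 (min_le_right _ _)
    have hp1 : h ^ (m - 5/3) ≤ τ₀⁻¹ ^ 2 := by
      calc h ^ (m - 5/3) ≤ h ^ ((1:ℝ)/3) :=
            Real.rpow_le_rpow_of_exponent_ge hh h1 (by linarith)
        _ ≤ (τ₀⁻¹ ^ 6) ^ ((1:ℝ)/3) := Real.rpow_le_rpow hh.le h6 (by norm_num)
        _ = τ₀⁻¹ ^ 2 := by
            rw [← Real.rpow_natCast τ₀⁻¹ 6, ← Real.rpow_natCast τ₀⁻¹ 2,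
              ← Real.rpow_mul (by positivity)]
            norm_num
    have key2 : (τ₀ * h ^ (-(1 : ℝ) / 3)) ^ 2 * (h ^ (-m))⁻¹ ≤ h := by
      have e1 : (h ^ (-(1:ℝ)/3)) ^ 2 = h ^ (-(2:ℝ)/3) := by
        rw [← Real.rpow_natCast (h ^ (-(1:ℝ)/3)) 2, ← Real.rpow_mul hh.le]
        norm_num
      have e2 : (h ^ (-m))⁻¹ = h ^ m := by rw [← Real.rpow_neg hh.le, neg_neg]
      have e3 : (τ₀ * h ^ (-(1:ℝ)/3)) ^ 2 * (h ^ (-m))⁻¹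
          = τ₀ ^ 2 * (h ^ ((1:ℝ)) * h ^ (m - 5/3)) := by
        rw [mul_pow, e1, e2, mul_assoc, ← Real.rpow_add hh, ← Real.rpow_add hh,
          show -(2:ℝ)/3 + m = 1 + (m - 5/3) by ring]
      rw [e3, Real.rpow_one]
      have hrp : (0:ℝ) < h ^ (m - 5/3) := Real.rpow_pos_of_pos hh _
      have hinv2 : τ₀ ^ 2 * τ₀⁻¹ ^ 2 = 1 := by field_simp
      nlinarith [mul_le_mul_of_nonneg_left hp1 (le_of_lt (pow_pos hτ0 2))]
    have hk := key_statement7 s (τ₀ * h ^ (-(1:ℝ)/3)) (h ^ (-m))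
      (Real.rpow_pos_of_pos hh _) r hr0 hra
    refine le_trans ?_ hk
    have hmuD : (0:ℝ) ≤ muD s (h ^ (-m)) r := by
      rw [muD, if_pos hra]; linarith
    have := mul_le_mul_of_nonneg_right key2 hmuD
    nlinarith [this]
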